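/- Let (β_i)_{i≥0} be a sequence in K \ {0} (char K = 0) with β_0 = 1, β_1 = 1/2, satisfying: (a) β_{i+1} = 2 − β_i for all odd i, and (b) there exists a constant r with 1/β_{2m} + 1/β_{2m+1} = r for all m ≥ 0. Then r = 3 and β_i = α_i for all i, where (α_i) is the Veronese sequence. -/

import Mathlib

/-- The Veronese sequence over a field `K` of characteristic zero: `α 0 = 1`,
`α (i+1) = 2 - α i` for `i` odd, and `α (i+1) = α i / (3 α i - 1)` for `i` even. -/
def veronese (K : Type*) [Field K] : ℕ → K
  | 0 => 1
  | (i + 1) =>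
      if Odd i then 2 - veronese K i else veronese K i / (3 * veronese K i - 1)

/-- Let `(β i)` be a sequence of nonzero elements of a field of characteristic `0` with
`β 0 = 1`, `β 1 = 1/2`, satisfying `β (i+1) = 2 - β i` for odd `i`, and such that
`1/β (2m) + 1/β (2m+1) = r` for a constant `r` independent of `m`.  Then `r = 3` and
`β` is the Veronese sequence. -/
theorem veronese_characterization {K : Type*} [Field K] [CharZero K]
    (β : ℕ → K) (hne : ∀ i, β i ≠ 0)
    (h0 : β 0 = 1) (h1 : β 1 = 1 / 2)
    (hodd : ∀ i, Odd i → β (i + 1) = 2 - β i)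
    (r : K) (hr : ∀ m : ℕ, 1 / β (2 * m) + 1 / β (2 * m + 1) = r) :
    r = 3 ∧ ∀ i, β i = veronese K i := by
  have hr3 : r = 3 := by
    have := hr 0
    rw [h0, h1] at this
    norm_num at this
    exact this.symm
  refine ⟨hr3, ?_⟩
  -- general step: for any m, β (2m+1) = β (2m) / (3 β (2m) - 1)
  have step : ∀ m, β (2 * m + 1) = β (2 * m) / (3 * β (2 * m) - 1) := by
    intro m
    have h := hr m
    rw [hr3] at h
    have hne1 := hne (2 * m)
    have hne2 := hne (2 * m + 1)
    field_simp at h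
    have hden : (3 : K) * β (2 * m) - 1 ≠ 0 := by
      intro hz
      apply hne1
      linear_combination h + β (2 * m + 1) * hz
    rw [eq_div_iff hden]
    linear_combination -h
  have key : ∀ m, β (2 * m) = veronese K (2 * m) ∧
      β (2 * m + 1) = veronese K (2 * m + 1) := by
    intro m
    induction m with
    | zero =>
      refine ⟨by simpa [veronese] using h0, ?_⟩
      simp [veronese, h1]
      norm_num
    | succ n ih =>
      have hv2n1 : veronese K (2 * n + 1) =
          veronese K (2 * n) / (3 * veronese K (2 * n) - 1) := by
        simp [veronese, Nat.odd_iff]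
      have hv2n2 : veronese K (2 * n + 2) = 2 - veronese K (2 * n + 1) := by
        simp [veronese, Nat.odd_iff]
      have hb2n2 : β (2 * n + 2) = 2 - β (2 * n + 1) :=
        hodd (2 * n + 1) (by simp [Nat.odd_iff])
      have e1 : β (2 * n + 2) = veronese K (2 * n + 2) := by
        rw [hb2n2, hv2n2, ih.2]
      constructor
      · show β (2 * n + 2) = veronese K (2 * n + 2)
        exact e1
      · show β (2 * n + 2 + 1) = veronese K (2 * n + 2 + 1)
        have hv : veronese K (2 * n + 3) =
            veronese K (2 * n + 2) / (3 * veronese K (2 * n + 2) - 1) := by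
          simp [veronese, Nat.odd_iff, Nat.even_add]
        have hb := step (n + 1)
        have e : 2 * (n + 1) = 2 * n + 2 := by ring
        rw [e] at hb
        rw [hb, hv, e1]
  intro i
  rcases Nat.even_or_odd i with ⟨m, hm⟩ | ⟨m, hm⟩
  · have := (key m).1
    have e : i = 2 * m := by omega
    rw [e]; exact this
  · have := (key m).2
    rw [hm]; exact this
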